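/- Product-to-sum exponential bound: for n×n complex matrices X_1,…,X_k with ‖X_m‖ ≤ M for all m and pairwise commutator norms ‖[X_m, X_{m'}]‖ ≤ η, there is a constant C(M,k) such that ‖exp(X_1)⋯exp(X_k) − exp(X_1 + ⋯ + X_k)‖ ≤ C(M,k)·η. In particular the difference vanishes when all X_m pairwise commute. -/

import Mathlib

open scoped Matrix.Norms.L2Operator

section Aux

open NormedSpace Set

variable {𝔸 : Type*} [NormedRing 𝔸] [NormedAlgebra ℂ 𝔸] [CompleteSpace 𝔸]

lemma aux_norm_exp_le (h1 : ‖(1:𝔸)‖ ≤ 1) (x : 𝔸) : ‖exp x‖ ≤ Real.exp ‖x‖ := by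
  simp only [exp_eq_tsum ℝ]
  have hs : HasSum (fun n : ℕ => ‖x‖ ^ n / (n.factorial)) (Real.exp ‖x‖) := by
    rw [Real.exp_eq_exp_ℝ]
    exact expSeries_div_hasSum_exp ‖x‖
  refine tsum_of_norm_bounded hs fun m => ?_
  have hxm : ‖x ^ m‖ ≤ ‖x‖ ^ m := by
    cases m with
    | zero => simpa using h1
    | succ p => exact norm_pow_le' x p.succ_pos
  have h2 : ‖(((m.factorial) : ℝ))⁻¹ • x ^ m‖ = (((m.factorial) : ℝ))⁻¹ * ‖x ^ m‖ := by
    rw [norm_smul, Real.norm_eq_abs, abs_inv, abs_of_nonneg (by positivity)]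
  rw [h2, div_eq_inv_mul]
  gcongr

lemma aux_gronwall_le {K ε : ℝ} (hK : 0 ≤ K) (hε : 0 ≤ ε) :
    gronwallBound 0 K ε 1 ≤ ε * Real.exp K := by
  rcases eq_or_lt_of_le hK with h | h
  · rw [← h, gronwallBound_K0]
    simp
  · have hp := Real.exp_pos K
    have h2 : Real.exp K - 1 ≤ K * Real.exp K := by
      have ha := Real.add_one_le_exp (-K)
      rw [Real.exp_neg] at ha
      have hc : (Real.exp K)⁻¹ * Real.exp K = 1 := inv_mul_cancel₀ hp.ne'
      nlinarith
    rw [gronwallBound_of_K_ne_0 h.ne']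
    simp only [zero_mul, mul_one, zero_add]
    rw [div_mul_eq_mul_div, div_le_iff₀ h]
    nlinarith


lemma aux_comm_bound (h1 : ‖(1:𝔸)‖ ≤ 1) {A B : 𝔸} {K η : ℝ} (hK : 0 ≤ K) (hA : ‖A‖ ≤ K)
    (hη : ‖A * B - B * A‖ ≤ η) :
    ‖exp A * B - B * exp A‖ ≤ Real.exp (2 * K) * η := by
  have hη0 : (0:ℝ) ≤ η := (norm_nonneg _).trans hη
  set f : ℝ → 𝔸 := fun t => exp (t • A) * B - B * exp (t • A) with hf
  set g : ℝ → 𝔸 := fun t => A * exp (t • A) * B - B * (A * exp (t • A)) with hg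
  have hderiv : ∀ t : ℝ, HasDerivAt f (g t) t := fun t =>
    ((hasDerivAt_exp_smul_const' A t).mul_const B).sub
      ((hasDerivAt_exp_smul_const' A t).const_mul B)
  have hgkey : ∀ t : ℝ, g t = A * f t + (A * B - B * A) * exp (t • A) := by
    intro t
    simp only [hf, hg]
    noncomm_ring
  have hnormE : ∀ t ∈ Ico (0:ℝ) 1, ‖exp (t • A)‖ ≤ Real.exp K := by
    intro t ht
    refine (aux_norm_exp_le h1 _).trans (Real.exp_le_exp.2 ?_)
    rw [norm_smul, Real.norm_eq_abs, abs_of_nonneg ht.1]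
    calc t * ‖A‖ ≤ 1 * K := by
          apply mul_le_mul ht.2.le hA (norm_nonneg _) zero_le_one
      _ = K := one_mul K
  have hbound : ∀ t ∈ Ico (0:ℝ) 1, ‖g t‖ ≤ K * ‖f t‖ + Real.exp K * η := by
    intro t ht
    rw [hgkey t]
    calc ‖A * f t + (A * B - B * A) * exp (t • A)‖
        ≤ ‖A * f t‖ + ‖(A * B - B * A) * exp (t • A)‖ := norm_add_le _ _
      _ ≤ ‖A‖ * ‖f t‖ + ‖A * B - B * A‖ * ‖exp (t • A)‖ := by
          gcongr <;> [exact norm_mul_le _ _; exact norm_mul_le _ _]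
      _ ≤ K * ‖f t‖ + Real.exp K * η := by
          refine add_le_add (mul_le_mul_of_nonneg_right hA (norm_nonneg _)) ?_
          rw [mul_comm (Real.exp K) η]
          exact mul_le_mul hη (hnormE t ht) (norm_nonneg _) hη0
  have hf0 : ‖f 0‖ ≤ 0 := by simp [hf, exp_zero]
  have hcont : ContinuousOn f (Icc (0:ℝ) 1) :=
    (continuous_iff_continuousAt.2 fun t => (hderiv t).continuousAt).continuousOn
  have := norm_le_gronwallBound_of_norm_deriv_right_le hcont
    (fun t ht => (hderiv t).hasDerivWithinAt) hf0 hbound 1 (by norm_num)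
  have h1A : f 1 = exp A * B - B * exp A := by simp [hf]
  rw [h1A] at this
  calc ‖exp A * B - B * exp A‖ ≤ gronwallBound 0 K (Real.exp K * η) (1 - 0) := this
    _ ≤ Real.exp K * η * Real.exp K := by
        rw [sub_zero]
        exact aux_gronwall_le hK (by positivity)
    _ = Real.exp (2 * K) * η := by rw [two_mul, Real.exp_add]; ring


lemma aux_two_bound (h1 : ‖(1:𝔸)‖ ≤ 1) {A B : 𝔸} {K η : ℝ} (hK : 0 ≤ K) (hA : ‖A‖ ≤ K)
    (hB : ‖B‖ ≤ K) (hη : ‖A * B - B * A‖ ≤ η) :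
    ‖exp A * exp B - exp (A + B)‖ ≤ Real.exp (5 * K) * η := by
  have hη0 : (0:ℝ) ≤ η := (norm_nonneg _).trans hη
  set f : ℝ → 𝔸 := fun t => exp (t • A) * exp (t • B) - exp (t • (A + B)) with hf
  set g : ℝ → 𝔸 := fun t =>
    (A * exp (t • A) * exp (t • B) + exp (t • A) * (B * exp (t • B)))
      - (A + B) * exp (t • (A + B)) with hg
  have hderiv : ∀ t : ℝ, HasDerivAt f (g t) t := fun t =>
    ((hasDerivAt_exp_smul_const' A t).mul (hasDerivAt_exp_smul_const' B t)).sub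
      (hasDerivAt_exp_smul_const' (A + B) t)
  have hgkey : ∀ t : ℝ, g t = (A + B) * f t +
      (exp (t • A) * B - B * exp (t • A)) * exp (t • B) := by
    intro t
    simp only [hf, hg]
    noncomm_ring
  have hnorm : ∀ (C : 𝔸), ‖C‖ ≤ K → ∀ t ∈ Ico (0:ℝ) 1, ‖exp (t • C)‖ ≤ Real.exp K := by
    intro C hC t ht
    refine (aux_norm_exp_le h1 _).trans (Real.exp_le_exp.2 ?_)
    rw [norm_smul, Real.norm_eq_abs, abs_of_nonneg ht.1]
    calc t * ‖C‖ ≤ 1 * K := mul_le_mul ht.2.le hC (norm_nonneg _) zero_le_one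
      _ = K := one_mul K
  have hcomm : ∀ t ∈ Ico (0:ℝ) 1,
      ‖exp (t • A) * B - B * exp (t • A)‖ ≤ Real.exp (2 * K) * η := by
    intro t ht
    refine aux_comm_bound h1 hK ?_ ?_
    · rw [norm_smul, Real.norm_eq_abs, abs_of_nonneg ht.1]
      calc t * ‖A‖ ≤ 1 * K := mul_le_mul ht.2.le hA (norm_nonneg _) zero_le_one
        _ = K := one_mul K
    · have : t • A * B - B * (t • A) = t • (A * B - B * A) := by
        rw [smul_mul_assoc, mul_smul_comm, smul_sub]
      rw [this, norm_smul, Real.norm_eq_abs, abs_of_nonneg ht.1]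
      calc t * ‖A * B - B * A‖ ≤ 1 * η := mul_le_mul ht.2.le hη (norm_nonneg _) zero_le_one
        _ = η := one_mul η
  have hbound : ∀ t ∈ Ico (0:ℝ) 1, ‖g t‖ ≤ (2 * K) * ‖f t‖ + Real.exp (3 * K) * η := by
    intro t ht
    rw [hgkey t]
    have hAB : ‖A + B‖ ≤ 2 * K := by
      calc ‖A + B‖ ≤ ‖A‖ + ‖B‖ := norm_add_le _ _
        _ ≤ 2 * K := by linarith
    calc ‖(A + B) * f t + (exp (t • A) * B - B * exp (t • A)) * exp (t • B)‖
        ≤ ‖(A + B) * f t‖ + ‖(exp (t • A) * B - B * exp (t • A)) * exp (t • B)‖ :=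
          norm_add_le _ _
      _ ≤ ‖A + B‖ * ‖f t‖ +
            ‖exp (t • A) * B - B * exp (t • A)‖ * ‖exp (t • B)‖ :=
          add_le_add (norm_mul_le _ _) (norm_mul_le _ _)
      _ ≤ (2 * K) * ‖f t‖ + (Real.exp (2 * K) * η) * Real.exp K := by
          refine add_le_add (mul_le_mul_of_nonneg_right hAB (norm_nonneg _)) ?_
          exact mul_le_mul (hcomm t ht) (hnorm B hB t ht) (norm_nonneg _) (by positivity)
      _ = (2 * K) * ‖f t‖ + Real.exp (3 * K) * η := by
          rw [show (3:ℝ) * K = 2 * K + K by ring, Real.exp_add]; ring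
  have hf0 : ‖f 0‖ ≤ 0 := by simp [hf, exp_zero]
  have hcont : ContinuousOn f (Icc (0:ℝ) 1) :=
    (continuous_iff_continuousAt.2 fun t => (hderiv t).continuousAt).continuousOn
  have := norm_le_gronwallBound_of_norm_deriv_right_le hcont
    (fun t ht => (hderiv t).hasDerivWithinAt) hf0 hbound 1 (by norm_num)
  have h1A : f 1 = exp A * exp B - exp (A + B) := by simp [hf]
  rw [h1A] at this
  calc ‖exp A * exp B - exp (A + B)‖
      ≤ gronwallBound 0 (2 * K) (Real.exp (3 * K) * η) (1 - 0) := this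
    _ ≤ Real.exp (3 * K) * η * Real.exp (2 * K) := by
        rw [sub_zero]
        exact aux_gronwall_le (by positivity) (by positivity)
    _ = Real.exp (5 * K) * η := by
        rw [show (5:ℝ) * K = 3 * K + 2 * K by ring, Real.exp_add]; ring


lemma aux_key (h1 : ‖(1:𝔸)‖ ≤ 1) (k : ℕ) (M : ℝ) :
    ∃ C > 0, ∀ η ≥ (0:ℝ), ∀ X : Fin k → 𝔸,
      (∀ m, ‖X m‖ ≤ M) → (∀ m m', ‖X m * X m' - X m' * X m‖ ≤ η) →
      ‖(List.ofFn fun m => exp (X m)).prod - exp (∑ m, X m)‖ ≤ C * η := by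
  induction k with
  | zero =>
    refine ⟨1, one_pos, fun η hη X _ _ => ?_⟩
    simp [exp_zero, hη]
  | succ k ih =>
    obtain ⟨C, hC, hrec⟩ := ih
    set K : ℝ := max M 0 with hKdef
    have hK0 : (0:ℝ) ≤ K := le_max_right _ _
    set KK : ℝ := max (k * K) K with hKKdef
    have hKK0 : (0:ℝ) ≤ KK := hK0.trans (le_max_right _ _)
    refine ⟨Real.exp K * C + Real.exp (5 * KK) * k + 1, by positivity, ?_⟩
    intro η hη X hM hcomm
    set Y : Fin k → 𝔸 := fun m => X m.succ with hY
    have hrecY := hrec η hη Y (fun m => hM _) (fun m m' => hcomm _ _)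
    set S : 𝔸 := ∑ m, Y m with hS
    set P : 𝔸 := (List.ofFn fun m => exp (Y m)).prod with hP
    have hprod : (List.ofFn fun m : Fin (k+1) => exp (X m)).prod = exp (X 0) * P := by
      rw [List.ofFn_succ, List.prod_cons]
    have hsum : (∑ m : Fin (k+1), X m) = X 0 + S := Fin.sum_univ_succ X
    have hX0 : ‖X 0‖ ≤ KK := ((hM 0).trans (le_max_left _ _)).trans (le_max_right _ _)
    have hSK : ‖S‖ ≤ KK := by
      refine le_trans ?_ (le_max_left (k * K) K)
      calc ‖S‖ ≤ ∑ m : Fin k, ‖Y m‖ := norm_sum_le _ _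
        _ ≤ ∑ _m : Fin k, K := Finset.sum_le_sum fun m _ => (hM _).trans (le_max_left _ _)
        _ = k * K := by simp [mul_comm]
    have hcS : ‖X 0 * S - S * X 0‖ ≤ k * η := by
      have heq : X 0 * S - S * X 0 = ∑ m : Fin k, (X 0 * Y m - Y m * X 0) := by
        rw [hS, Finset.mul_sum, Finset.sum_mul, ← Finset.sum_sub_distrib]
      rw [heq]
      calc ‖∑ m : Fin k, (X 0 * Y m - Y m * X 0)‖ ≤ ∑ m : Fin k, ‖X 0 * Y m - Y m * X 0‖ :=
            norm_sum_le _ _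
        _ ≤ ∑ _m : Fin k, η := Finset.sum_le_sum fun m _ => hcomm _ _
        _ = k * η := by simp [mul_comm]
    have htwo : ‖exp (X 0) * exp S - exp (X 0 + S)‖ ≤ Real.exp (5 * KK) * (k * η) :=
      aux_two_bound h1 hKK0 hX0 hSK hcS
    have hexpX0 : ‖exp (X 0)‖ ≤ Real.exp K :=
      (aux_norm_exp_le h1 _).trans (Real.exp_le_exp.2 ((hM 0).trans (le_max_left _ _)))
    rw [hprod, hsum]
    calc ‖exp (X 0) * P - exp (X 0 + S)‖
        ≤ ‖exp (X 0) * P - exp (X 0) * exp S‖ +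
            ‖exp (X 0) * exp S - exp (X 0 + S)‖ := norm_sub_le_norm_sub_add_norm_sub _ _ _
      _ ≤ Real.exp K * (C * η) + Real.exp (5 * KK) * (k * η) := by
          refine add_le_add ?_ htwo
          rw [← mul_sub]
          calc ‖exp (X 0) * (P - exp S)‖ ≤ ‖exp (X 0)‖ * ‖P - exp S‖ := norm_mul_le _ _
            _ ≤ Real.exp K * (C * η) :=
              mul_le_mul hexpX0 hrecY (norm_nonneg _) (Real.exp_pos _).le
      _ ≤ (Real.exp K * C + Real.exp (5 * KK) * k + 1) * η := by nlinarith [Real.exp_pos K]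

lemma aux_comm_case (k : ℕ) (X : Fin k → 𝔸) (hc : ∀ m m', Commute (X m) (X m')) :
    (List.ofFn fun m => exp (X m)).prod = exp (∑ m, X m) := by
  induction k with
  | zero => simp [exp_zero]
  | succ k ih =>
    rw [List.ofFn_succ, List.prod_cons, ih (fun m => X m.succ) (fun m m' => hc _ _),
      Fin.sum_univ_succ, exp_add_of_commute_of_mem_ball (𝕂 := ℂ) (Commute.sum_right _ _ _ fun m _ => hc 0 m.succ)
        ((expSeries_radius_eq_top ℂ 𝔸).symm ▸ edist_lt_top _ _)
        ((expSeries_radius_eq_top ℂ 𝔸).symm ▸ edist_lt_top _ _)]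

end Aux

theorem product_to_sum_exponential_bound (n k : ℕ) (M : ℝ) :
    (∃ C > 0, ∀ η ≥ (0:ℝ), ∀ X : Fin k → Matrix (Fin n) (Fin n) ℂ,
      (∀ m, ‖X m‖ ≤ M) →
      (∀ m m', ‖X m * X m' - X m' * X m‖ ≤ η) →
      ‖(List.ofFn fun m => NormedSpace.exp (X m)).prod -
          NormedSpace.exp (∑ m, X m)‖ ≤ C * η) ∧
    (∀ X : Fin k → Matrix (Fin n) (Fin n) ℂ,
      (∀ m m', Commute (X m) (X m')) →
      (List.ofFn fun m => NormedSpace.exp (X m)).prod =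
        NormedSpace.exp (∑ m, X m)) := by
  have h1 : ‖(1 : Matrix (Fin n) (Fin n) ℂ)‖ ≤ 1 := by
    have h := Matrix.l2_opNorm_conjTranspose_mul_self (1 : Matrix (Fin n) (Fin n) ℂ)
    rw [Matrix.conjTranspose_one, one_mul] at h
    by_contra hgt
    push_neg at hgt
    nlinarith [norm_nonneg (1 : Matrix (Fin n) (Fin n) ℂ)]
  have hexp : (NormedSpace.exp : Matrix (Fin n) (Fin n) ℂ → _) = NormedSpace.exp :=
    rfl
  refine ⟨?_, fun X hc => aux_comm_case k X hc⟩
  obtain ⟨C, hC, h⟩ := aux_key h1 k M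
  refine ⟨C, hC, fun η hη X hM hc => ?_⟩
  rw [hexp]
  exact h η hη X hM hc
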